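/- Let {R_n} be a monic polynomial sequence satisfying (x R_{n+1}(x))' = (n+2) R_{n+1}(x) − (n+1)(λ_n/λ_{n+1}) R_n(x) for all n ≥ 0 (with λ_n ≠ 0) and R_{-1} := 0. Then for every real α and all n ≥ 0, (1/x)·A(x·R_{n+1}(x)) + 2α (x R_{n+1}(x))' = −x R_{n+1}(x) + (n+2)(n+2+2α) R_{n+1}(x) − (n+1)(λ_n/λ_{n+1})(2n+3+2α) R_n(x) + n(n+1)(λ_{n−1}/λ_{n+1}) R_{n−1}(x), where A f = x² f'' + x f' − x f. -/

import Mathlib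

open Polynomial

/-- The differential operator `A f = x² f'' + x f' − x f` on polynomials. -/
noncomputable def opA (f : Polynomial ℝ) : Polynomial ℝ :=
  X ^ 2 * derivative (derivative f) + X * derivative f - X * f

private lemma divX_X_mul (g : Polynomial ℝ) : (X * g).divX = g := by
  have h := X_mul_divX_add (X * g)
  have h0 : (X * g).coeff 0 = 0 := by simp [mul_coeff_zero]
  rw [h0, map_zero, add_zero] at h
  exact mul_left_cancel₀ (X_ne_zero) h

/-- If a monic sequence `{R_n}` satisfies the reversed-Appell differential recursion
`(x R_{n+1})' = (n+2) R_{n+1} − (n+1)(λ_n/λ_{n+1}) R_n`, then for every `α`,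
`(1/x)A(x R_{n+1}) + 2α (x R_{n+1})' = −x R_{n+1} + (n+2)(n+2+2α) R_{n+1}
− (n+1)(λ_n/λ_{n+1})(2n+3+2α) R_n + n(n+1)(λ_{n−1}/λ_{n+1}) R_{n−1}`
(with `R_{−1} = 0`; the `n = 0` term has vanishing coefficient `n(n+1)`). -/
theorem reversed_appell_opA_relation (R : ℕ → Polynomial ℝ) (l : ℕ → ℝ)
    (hmonic : ∀ n, (R n).Monic) (hdeg : ∀ n, (R n).natDegree = n)
    (hlne : ∀ n, l n ≠ 0)
    (hdiff : ∀ n, derivative (X * R (n + 1)) =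
      C ((n : ℝ) + 2) * R (n + 1) - C (((n : ℝ) + 1) * (l n / l (n + 1))) * R n) :
    ∀ (α : ℝ) (n : ℕ),
      (opA (X * R (n + 1))).divX + C (2 * α) * derivative (X * R (n + 1)) =
        -(X * R (n + 1)) + C (((n : ℝ) + 2) * ((n : ℝ) + 2 + 2 * α)) * R (n + 1)
          - C (((n : ℝ) + 1) * (l n / l (n + 1)) * (2 * (n : ℝ) + 3 + 2 * α)) * R n
          + C ((n : ℝ) * ((n : ℝ) + 1) * (l (n - 1) / l (n + 1))) * R (n - 1) := by
  -- R 0 = 1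
  have hR0 : R 0 = 1 := (hmonic 0).natDegree_eq_zero.mp (hdeg 0)
  -- uniform formula for X * (R m)'
  have hXdR : ∀ m : ℕ, X * derivative (R m) =
      C (m : ℝ) * R m - C ((m : ℝ) * (l (m - 1) / l m)) * R (m - 1) := by
    intro m
    cases m with
    | zero => simp [hR0]
    | succ k =>
      have h := hdiff k
      rw [derivative_mul, derivative_X, one_mul] at h
      push_cast
      simp only [map_add, map_ofNat, map_one] at h ⊢
      linear_combination h
  intro α n
  have hf := hdiff n
  have hdf : derivative (derivative (X * R (n + 1))) =
      C ((n : ℝ) + 2) * derivative (R (n + 1))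
        - C (((n : ℝ) + 1) * (l n / l (n + 1))) * derivative (R n) := by
    rw [hf, derivative_sub, derivative_C_mul, derivative_C_mul]
  have h1 := hXdR (n + 1)
  have h2 := hXdR n
  push_cast at h1
  have hprod : C (l (n - 1) / l (n + 1)) =
      C (l n / l (n + 1)) * C (l (n - 1) / l n) := by
    rw [← C_mul]
    congr 1
    field_simp
    rw [mul_div_mul_right _ _ (hlne n)]
  unfold opA
  rw [show X ^ 2 * derivative (derivative (X * R (n + 1)))
        + X * derivative (X * R (n + 1)) - X * (X * R (n + 1))
      = X * (X * derivative (derivative (X * R (n + 1)))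
        + derivative (X * R (n + 1)) - X * R (n + 1)) from by ring,
    divX_X_mul]
  rw [hdf]
  rw [show X * (C ((n : ℝ) + 2) * derivative (R (n + 1))
        - C (((n : ℝ) + 1) * (l n / l (n + 1))) * derivative (R n))
      = C ((n : ℝ) + 2) * (X * derivative (R (n + 1)))
        - C (((n : ℝ) + 1) * (l n / l (n + 1))) * (X * derivative (R n)) from by ring]
  rw [h1, h2, hf]
  simp only [map_mul, map_add, map_sub, map_one, map_ofNat]
  rw [hprod]
  ring
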